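/- arXiv:1212.5490 — 2 statements merged into one kernel-verified Lean document; each statement's English description precedes it below -/
import Mathlib

section
/- Let A be a d×d matrix of rank r, and suppose γ_r(A,B) ≠ 0 for a d×d matrix B. Then det(A + 2hB)/det(A + hB) → 2^{d-r} as h ↓ 0. -/
open Matrix

noncomputable def colMix {d : ℕ} (A B : Matrix (Fin d) (Fin d) ℝ) (I : Finset (Fin d)) :
    Matrix (Fin d) (Fin d) ℝ :=
  Matrix.of fun i j => if j ∈ I then A i j else B i j

noncomputable def gammaR {d : ℕ} (r : ℕ) (A B : Matrix (Fin d) (Fin d) ℝ) : ℝ :=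
  ∑ I ∈ Finset.univ.powersetCard r, (colMix A B I).det

/-- If `|I| > rank A`, the matrix with columns of `A` on `I` has zero determinant. -/
lemma det_colMix_eq_zero {d r : ℕ} {A : Matrix (Fin d) (Fin d) ℝ}
    (B : Matrix (Fin d) (Fin d) ℝ) (hA : A.rank = r) {I : Finset (Fin d)}
    (hI : r < I.card) : (colMix A B I).det = 0 := by
  rw [← Matrix.exists_mulVec_eq_zero_iff]
  have hdep : ¬ LinearIndependent ℝ (fun x : {j // j ∈ I} => (fun i => A i x.1)) := by
    intro hli
    have h1 := linearIndependent_iff_card_le_finrank_span.mp hli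
    have hsub : Set.range (fun x : {j // j ∈ I} => (fun i => A i x.1))
        ⊆ Set.range Aᵀ := by
      rintro _ ⟨x, rfl⟩
      exact ⟨x.1, rfl⟩
    have h2 : (Set.range (fun x : {j // j ∈ I} => (fun i => A i x.1))).finrank ℝ
        ≤ (Set.range Aᵀ).finrank ℝ :=
      Submodule.finrank_mono (Submodule.span_mono hsub)
    have h3 : (Set.range Aᵀ).finrank ℝ = r := by
      rw [Set.finrank]
      exact ((Matrix.rank_eq_finrank_span_cols A).symm.trans hA :)
    rw [Fintype.card_coe] at h1
    omega
  obtain ⟨g, hsum, i₀, hgi₀⟩ := Fintype.not_linearIndependent_iff.mp hdep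
  refine ⟨fun j => if hj : j ∈ I then g ⟨j, hj⟩ else 0, ?_, ?_⟩
  · intro h0
    have := congrFun h0 i₀.1
    simp only [dif_pos i₀.2, Pi.zero_apply] at this
    exact hgi₀ (by simpa using this)
  · funext i
    have hs := congrFun hsum i
    simp only [Finset.sum_apply, Pi.smul_apply, smul_eq_mul, Pi.zero_apply] at hs
    show (∑ j, colMix A B I i j * _) = 0
    rw [← Finset.sum_subset (Finset.subset_univ I) (fun j _ hj => by
      simp [dif_neg hj])]
    rw [← Finset.sum_coe_sort I
      (fun j => colMix A B I i j * (if hj : j ∈ I then g ⟨j, hj⟩ else 0))]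
    rw [← hs]
    refine Finset.sum_congr rfl fun x _ => ?_
    simp [colMix, x.2, mul_comm]

/-- Expansion of `det (A + h • B)` by multilinearity in the columns. -/
lemma det_add_smul_expand {d : ℕ} (A B : Matrix (Fin d) (Fin d) ℝ) (h : ℝ) :
    (A + h • B).det = ∑ I : Finset (Fin d), h ^ (d - I.card) * (colMix A B I).det := by
  have key : (A + h • B).det = (Aᵀ + h • Bᵀ).det := by
    rw [← Matrix.det_transpose (A + h • B), Matrix.transpose_add, Matrix.transpose_smul]
  rw [key]
  have hadd : (Aᵀ + h • Bᵀ : Matrix (Fin d) (Fin d) ℝ).det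
      = (Matrix.detRowAlternating : (Fin d → ℝ) [⋀^Fin d]→ₗ[ℝ] ℝ).toMultilinearMap
        ((Aᵀ : Fin d → Fin d → ℝ) + (h • Bᵀ : Matrix (Fin d) (Fin d) ℝ)) := rfl
  erw [hadd, show ((Aᵀ : Fin d → Fin d → ℝ) + (h • Bᵀ : Matrix (Fin d) (Fin d) ℝ))
      = ((Aᵀ : Fin d → Fin d → ℝ) + ((h • Bᵀ : Matrix (Fin d) (Fin d) ℝ) : Fin d → Fin d → ℝ)
        : Fin d → Fin d → ℝ) from rfl,
    MultilinearMap.map_add_univ]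
  refine Finset.sum_congr rfl fun s _ => ?_
  have hpw : s.piecewise (Aᵀ : Fin d → Fin d → ℝ) (h • Bᵀ : Matrix (Fin d) (Fin d) ℝ)
      = fun i => (s.piecewise (fun _ => (1:ℝ)) (fun _ => h) i) •
        (s.piecewise (Aᵀ : Fin d → Fin d → ℝ) (Bᵀ : Fin d → Fin d → ℝ)) i := by
    funext i
    by_cases hi : i ∈ s <;> simp [Finset.piecewise, hi]
    funext j; simp
  show (Matrix.detRowAlternating : (Fin d → ℝ) [⋀^Fin d]→ₗ[ℝ] ℝ).toMultilinearMap
        (s.piecewise (Aᵀ : Fin d → Fin d → ℝ) (h • Bᵀ : Matrix (Fin d) (Fin d) ℝ)) = _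
  rw [hpw, MultilinearMap.map_smul_univ, Finset.prod_piecewise]
  have hcard : (∏ _i ∈ Finset.univ ∩ s, (1:ℝ)) * ∏ _i ∈ Finset.univ \ s, h
      = h ^ (d - s.card) := by
    rw [Finset.prod_const, Finset.prod_const, one_pow, one_mul]
    congr 1
    rw [← Finset.compl_eq_univ_sdiff, Finset.card_compl, Fintype.card_fin]
  rw [hcard]
  congr 1
  have : s.piecewise (Aᵀ : Fin d → Fin d → ℝ) (Bᵀ : Fin d → Fin d → ℝ)
      = (colMix A B s)ᵀ := by
    funext i j
    by_cases hi : i ∈ s <;> simp [Finset.piecewise, hi, colMix, Matrix.transpose]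
  rw [this]
  exact Matrix.det_transpose (colMix A B s)

theorem det_ratio_identifies_rank (d r : ℕ) (A B : Matrix (Fin d) (Fin d) ℝ)
    (hA : A.rank = r) (hγ : gammaR r A B ≠ 0) :
    Filter.Tendsto (fun h : ℝ => (A + (2 * h) • B).det / (A + h • B).det)
      (nhdsWithin 0 (Set.Ioi 0)) (nhds ((2:ℝ) ^ (d - r))) := by
  have hrd : r ≤ d := by
    have := A.rank_le_card_width
    simp only [Fintype.card_fin] at this
    omega
  set F : ℝ → ℝ := fun h => ∑ I : Finset (Fin d), h ^ (r - I.card) * (colMix A B I).det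
    with hF
  have hcardI : ∀ I : Finset (Fin d), I.card ≤ d := fun I => by
    simpa using Finset.card_le_card I.subset_univ
  have detF : ∀ h : ℝ, (A + h • B).det = h ^ (d - r) * F h := by
    intro h
    rw [det_add_smul_expand, hF, Finset.mul_sum]
    refine Finset.sum_congr rfl fun I _ => ?_
    by_cases hc : I.card ≤ r
    · rw [← mul_assoc, ← pow_add]
      congr 2
      have := hcardI I
      omega
    · rw [det_colMix_eq_zero B hA (by omega), mul_zero, mul_zero, mul_zero]
  have F0 : F 0 = gammaR r A B := by
    have hterm : ∀ I : Finset (Fin d),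
        (0:ℝ) ^ (r - I.card) * (colMix A B I).det
          = if I.card = r then (colMix A B I).det else 0 := by
      intro I
      rcases lt_trichotomy I.card r with hlt | heq | hgt
      · rw [zero_pow (by omega), zero_mul, if_neg (by omega)]
      · rw [heq, Nat.sub_self, pow_zero, one_mul, if_pos rfl]
      · rw [det_colMix_eq_zero B hA hgt, mul_zero, if_neg (by omega)]
    rw [hF]
    simp only [hterm]
    rw [gammaR, Finset.powersetCard_eq_filter, Finset.powerset_univ, Finset.sum_filter]
  have hFcont : Continuous F :=
    continuous_finset_sum _ fun I _ => (continuous_pow _).mul continuous_const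
  have t1 : Filter.Tendsto F (nhdsWithin 0 (Set.Ioi 0)) (nhds (gammaR r A B)) := by
    rw [← F0]
    exact (hFcont.tendsto 0).mono_left nhdsWithin_le_nhds
  have t2 : Filter.Tendsto (fun h : ℝ => F (2 * h)) (nhdsWithin 0 (Set.Ioi 0))
      (nhds (gammaR r A B)) := by
    rw [← F0]
    have hlin : Filter.Tendsto (fun h : ℝ => 2 * h) (nhdsWithin 0 (Set.Ioi 0)) (nhds 0) := by
      have : Continuous (fun h : ℝ => 2 * h) := by continuity
      have := (this.tendsto 0).mono_left (nhdsWithin_le_nhds (s := Set.Ioi (0:ℝ)))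
      simpa using this
    exact (hFcont.tendsto 0).comp hlin
  have tmain : Filter.Tendsto (fun h : ℝ => (2:ℝ) ^ (d - r) * (F (2 * h) / F h))
      (nhdsWithin 0 (Set.Ioi 0)) (nhds ((2:ℝ) ^ (d - r))) := by
    have := Filter.Tendsto.mul (tendsto_const_nhds
      (x := (2:ℝ) ^ (d - r)) (f := nhdsWithin 0 (Set.Ioi 0))) (t2.div t1 hγ)
    simpa [div_self hγ] using this
  refine tmain.congr' ?_
  filter_upwards [self_mem_nhdsWithin] with h (hh : 0 < h)
  have hne : h ^ (d - r) ≠ 0 := pow_ne_zero _ (ne_of_gt hh)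
  rw [detF, detF, mul_pow, mul_assoc, mul_div_assoc, mul_div_mul_left _ _ hne]
end

section
/- There is a constant K = K(d) such that for all r ∈ {0,…,d}, h, h' ∈ (0,1], and d×d matrices A,B,C,D and A',B',C',D' with rank(A) ≤ r and rank(A') ≤ r: |(hh')^{-(2d-2r)} det(A+hB+h²C+h²D)² det(A'+h'B'+h'²C'+h'²D')² − γ_r(A,B)² γ_r(A',B')²| ≤ K(h+h')(ΛΛ')^{2d}, where Λ = ‖A‖+‖B‖+‖C‖+‖D‖ and Λ' = ‖A'‖+‖B'‖+‖C'‖+‖D'‖. -/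
/-- `γ_{r-1}(A,B)`, with the convention `γ_{-1} = 0`. -/
noncomputable def gammaPred {d : ℕ} (r : ℕ) (A B : Matrix (Fin d) (Fin d) ℝ) : ℝ :=
  if r = 0 then 0 else gammaR (r - 1) A B

/-- `γ'_r(A,B,C)`: sum over ordered partitions `(I₁,I₂,I₃)` of sizes `r, d-r-1, 1`,
with columns of `A` on `I₁`, of `C` on the singleton `I₃`, of `B` elsewhere. -/
noncomputable def gamma' {d : ℕ} (r : ℕ) (A B C : Matrix (Fin d) (Fin d) ℝ) : ℝ :=
  ∑ I ∈ Finset.univ.powersetCard r, ∑ k ∈ Iᶜ,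
    Matrix.det (Matrix.of fun i j =>
      if j ∈ I then A i j else if j = k then C i j else B i j)

/-- Frobenius (Euclidean) norm of a matrix. -/
noncomputable def frob {d : ℕ} (A : Matrix (Fin d) (Fin d) ℝ) : ℝ :=
  Real.sqrt (∑ i, ∑ j, (A i j) ^ 2)


open Matrix Finset

variable {d : ℕ}

lemma frob_nonneg (A : Matrix (Fin d) (Fin d) ℝ) : 0 ≤ frob A := Real.sqrt_nonneg _

lemma abs_entry_le_frob (A : Matrix (Fin d) (Fin d) ℝ) (i j : Fin d) : |A i j| ≤ frob A := by
  rw [frob, ← Real.sqrt_sq_eq_abs]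
  apply Real.sqrt_le_sqrt
  calc A i j ^ 2 ≤ ∑ j', A i j' ^ 2 :=
        Finset.single_le_sum (f := fun j' => A i j' ^ 2) (fun _ _ => sq_nonneg _) (mem_univ j)
    _ ≤ ∑ i', ∑ j', A i' j' ^ 2 :=
        Finset.single_le_sum (f := fun i' => ∑ j', A i' j' ^ 2) (fun _ _ => Finset.sum_nonneg fun _ _ => sq_nonneg _) (mem_univ i)

lemma abs_det_le {M : Matrix (Fin d) (Fin d) ℝ} {x : ℝ}
    (h : ∀ i j, |M i j| ≤ x) : |M.det| ≤ d.factorial * x ^ d := by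
  have := Matrix.det_le (A := M) (abv := AbsoluteValue.abs) (x := x) h
  simpa [nsmul_eq_mul] using this

lemma rank_add_le' (X Y : Matrix (Fin d) (Fin d) ℝ) : (X + Y).rank ≤ X.rank + Y.rank := by
  classical
  rw [Matrix.rank, Matrix.rank, Matrix.rank]
  have hle : LinearMap.range (X + Y).mulVecLin ≤
      LinearMap.range X.mulVecLin ⊔ LinearMap.range Y.mulVecLin := by
    rintro v ⟨u, rfl⟩
    rw [Matrix.mulVecLin_apply, Matrix.add_mulVec]
    exact Submodule.add_mem_sup ⟨u, by simp⟩ ⟨u, by simp⟩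
  exact le_trans (Submodule.finrank_mono hle)
    (Submodule.finrank_add_le_finrank_add_finrank _ _)

lemma det_eq_zero_of_cols {A M : Matrix (Fin d) (Fin d) ℝ} {I : Finset (Fin d)}
    (hM : ∀ i j, j ∈ I → M i j = A i j) (hr : A.rank < I.card) : M.det = 0 := by
  classical
  by_contra hdet
  have hunit : IsUnit M := (Matrix.isUnit_iff_isUnit_det M).2 (isUnit_iff_ne_zero.2 hdet)
  have hrankM : M.rank = d := by simpa using Matrix.rank_of_isUnit M hunit
  set w : Fin d → ℝ := fun j => if j ∈ I then 1 else 0 with hw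
  set w' : Fin d → ℝ := fun j => if j ∈ I then 0 else 1 with hw'
  have hsplit : M = A * Matrix.diagonal w + M * Matrix.diagonal w' := by
    ext i j
    by_cases hj : j ∈ I <;>
      simp [Matrix.add_apply, Matrix.mul_diagonal, hw, hw', hj, hM i j]
  have h1 : (A * Matrix.diagonal w).rank ≤ A.rank := Matrix.rank_mul_le_left _ _
  have h2 : (M * Matrix.diagonal w').rank ≤ (Matrix.diagonal w').rank :=
    Matrix.rank_mul_le_right _ _
  have h3 : (Matrix.diagonal w').rank = d - I.card := by
    rw [Matrix.rank_diagonal]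
    have e : ∀ i : Fin d, (w' i ≠ 0) ↔ ¬ (i ∈ I) := by
      intro i; by_cases h : i ∈ I <;> simp [hw', h]
    calc Fintype.card {i // w' i ≠ 0}
        = Fintype.card {i : Fin d // ¬ (i ∈ I)} :=
          Fintype.card_congr (Equiv.subtypeEquivRight e)
      _ = d - I.card := by
          rw [Fintype.card_subtype_compl]
          simp
  have h4 := rank_add_le' (A * Matrix.diagonal w) (M * Matrix.diagonal w')
  rw [← hsplit, hrankM] at h4
  have h5 : I.card ≤ d := by simpa using I.card_le_univ
  omega

lemma det_expand (r : ℕ) (hr : r ≤ d) {h : ℝ} (h0 : 0 < h) (h1 : h ≤ 1)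
    (A B N : Matrix (Fin d) (Fin d) ℝ) (hA : A.rank ≤ r)
    {β : ℝ} (hβ : 0 ≤ β)
    (hAb : ∀ i j, |A i j| ≤ β) (hBb : ∀ i j, |B i j| ≤ β) (hNb : ∀ i j, |N i j| ≤ β) :
    ∃ E : ℝ, (A + h • B + (h ^ 2) • N).det = h ^ (d - r) * (gammaR r A B + h * E)
      ∧ |E| ≤ 3 ^ d * d.factorial * β ^ d := by
  classical
  set w : Fin 3 → ℕ := ![0, 1, 2] with hwdef
  set P : Fin 3 → Matrix (Fin d) (Fin d) ℝ := ![A, B, N] with hPdef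
  have hPb : ∀ (k : Fin 3) i j, |P k i j| ≤ β := by
    intro k i j
    fin_cases k <;> simp [hPdef] <;> [exact hAb i j; exact hBb i j; exact hNb i j]
  -- expansion
  set Dm : (Fin d → Fin 3) → ℝ := fun σ => (Matrix.of fun i j => P (σ j) i j).det with hDm
  set W : (Fin d → Fin 3) → ℕ := fun σ => ∑ j, w (σ j) with hW
  have hdet : (A + h • B + (h ^ 2) • N).det
      = ∑ σ : Fin d → Fin 3, h ^ W σ * Dm σ := by
    rw [← Matrix.det_transpose]
    have e1 : ((A + h • B + (h ^ 2) • N)ᵀ : Matrix (Fin d) (Fin d) ℝ)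
        = fun j => ∑ k : Fin 3, (h ^ w k) • (fun i => P k i j) := by
      funext j i
      simp [Fin.sum_univ_three, hwdef, hPdef, Matrix.transpose_apply, Matrix.add_apply]
    rw [show ((A + h • B + (h ^ 2) • N)ᵀ).det
        = Matrix.detRowAlternating ((A + h • B + (h ^ 2) • N)ᵀ) from rfl, e1]
    refine Eq.trans
      ((Matrix.detRowAlternating (R := ℝ) (n := Fin d)).toMultilinearMap.map_sum
        (g := fun j k => (h ^ w k) • (fun i => P k i j))) ?_
    refine Finset.sum_congr rfl fun σ _ => ?_
    refine Eq.trans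
      ((Matrix.detRowAlternating (R := ℝ) (n := Fin d)).toMultilinearMap.map_smul_univ
        (fun j => h ^ w (σ j)) (fun j i => P (σ j) i j)) ?_
    have hm : (Matrix.detRowAlternating (R := ℝ) (n := Fin d)) (fun j i => P (σ j) i j)
        = Dm σ := by
      rw [show ((Matrix.detRowAlternating (R := ℝ) (n := Fin d)) (fun j i => P (σ j) i j) : ℝ)
          = Matrix.det (Matrix.of fun j i => P (σ j) i j) from rfl]
      rw [hDm, ← Matrix.det_transpose]
      congr 1
    show (∏ j, h ^ w (σ j)) • ((Matrix.detRowAlternating (R := ℝ) (n := Fin d))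
      (fun j i => P (σ j) i j)) = h ^ W σ * Dm σ
    rw [hm, Finset.prod_pow_eq_pow_sum, smul_eq_mul, hW]
  set z : (Fin d → Fin 3) → ℕ := fun σ => (Finset.univ.filter fun j => σ j = 0).card with hz
  set t : (Fin d → Fin 3) → ℕ := fun σ => (Finset.univ.filter fun j => σ j = 2).card with ht
  have hWzt : ∀ σ, W σ + z σ = d + t σ := by
    intro σ
    have key : ∀ k : Fin 3, w k + (if k = 0 then 1 else 0) = 1 + (if k = 2 then 1 else 0) := by
      decide
    have e2 : (∑ j, w (σ j)) + (∑ j : Fin d, if σ j = 0 then 1 else 0)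
        = (∑ j : Fin d, (1 : ℕ)) + (∑ j : Fin d, if σ j = 2 then 1 else 0) := by
      rw [← Finset.sum_add_distrib, ← Finset.sum_add_distrib]
      exact Finset.sum_congr rfl fun j _ => key (σ j)
    have hzz : z σ = ∑ j : Fin d, if σ j = 0 then 1 else 0 := Finset.card_filter _ _
    have htt : t σ = ∑ j : Fin d, if σ j = 2 then 1 else 0 := Finset.card_filter _ _
    have hdd : (∑ j : Fin d, (1 : ℕ)) = d := by simp
    rw [show W σ = ∑ j, w (σ j) from rfl, hzz, htt, e2, hdd]
  have hcase : ∀ k : Fin 3, k = 0 ∨ k = 1 ∨ k = 2 := by decide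
  have hDbound : ∀ σ, |Dm σ| ≤ d.factorial * β ^ d := by
    intro σ
    exact abs_det_le (fun i j => hPb (σ j) i j)
  have hDzero : ∀ σ : Fin d → Fin 3, r < z σ → Dm σ = 0 := by
    intro σ hσ
    refine det_eq_zero_of_cols (A := A) (I := Finset.univ.filter fun j => σ j = 0)
      ?_ (lt_of_le_of_lt hA hσ)
    intro i j hj
    have hσj : σ j = 0 := (Finset.mem_filter.mp hj).2
    show P (σ j) i j = A i j
    rw [hσj]
    simp [hPdef]
  set p : (Fin d → Fin 3) → Prop := fun σ => z σ = r ∧ t σ = 0 with hp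
  have hsplit := Finset.sum_filter_add_sum_filter_not Finset.univ p
    (fun σ => h ^ W σ * Dm σ)
  -- the main-term sum equals gammaR
  have hgamma : ∑ σ ∈ Finset.univ.filter p, Dm σ = gammaR r A B := by
    rw [gammaR]
    refine Finset.sum_nbij' (i := fun σ => Finset.univ.filter fun j => σ j = 0)
      (j := fun I => fun j => if j ∈ I then 0 else 1) ?_ ?_ ?_ ?_ ?_
    · intro σ hσ
      rw [Finset.mem_powersetCard_univ]
      exact ((Finset.mem_filter.mp hσ).2).1
    · intro I hI
      have hcard : (Finset.univ.filter fun j => (if j ∈ I then (0 : Fin 3) else 1) = 0) = I := by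
        ext j; by_cases hj : j ∈ I <;> simp [hj]
      refine Finset.mem_filter.mpr ⟨Finset.mem_univ _, ?_, ?_⟩
      · show (Finset.univ.filter fun j => (if j ∈ I then (0 : Fin 3) else 1) = 0).card = r
        rw [hcard]; exact Finset.mem_powersetCard_univ.mp hI
      · show (Finset.univ.filter fun j => (if j ∈ I then (0 : Fin 3) else 1) = 2).card = 0
        rw [Finset.card_eq_zero, Finset.filter_eq_empty_iff]
        intro j _; by_cases hj : j ∈ I <;> simp [hj]
    · intro σ hσ
      have ht0 : ∀ j, σ j ≠ 2 := by
        have := ((Finset.mem_filter.mp hσ).2).2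
        rw [show t σ = (Finset.univ.filter fun j => σ j = 2).card from rfl,
          Finset.card_eq_zero, Finset.filter_eq_empty_iff] at this
        exact fun j => this (Finset.mem_univ j)
      funext j
      by_cases hσj : σ j = 0
      · simp [hσj]
      · have h1 : σ j = 1 := by rcases hcase (σ j) with h' | h' | h' <;> tauto
        simp [hσj, h1]
    · intro I hI
      ext j; by_cases hj : j ∈ I <;> simp [hj]
    · intro σ hσ
      have ht0 : ∀ j, σ j ≠ 2 := by
        have := ((Finset.mem_filter.mp hσ).2).2
        rw [show t σ = (Finset.univ.filter fun j => σ j = 2).card from rfl,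
          Finset.card_eq_zero, Finset.filter_eq_empty_iff] at this
        exact fun j => this (Finset.mem_univ j)
      have hmat : (Matrix.of fun i j => P (σ j) i j)
          = colMix A B (Finset.univ.filter fun j => σ j = 0) := by
        ext i j
        show P (σ j) i j = _
        by_cases hσj : σ j = 0
        · rw [hσj]; simp [colMix, hPdef, hσj]
        · have h1 : σ j = 1 := by rcases hcase (σ j) with h' | h' | h' <;> tauto
          rw [h1]; simp [colMix, hPdef, hσj]
      show (Matrix.of fun i j => P (σ j) i j).det = _
      rw [hmat]
  set E : ℝ := ∑ σ ∈ Finset.univ.filter (fun σ => ¬ p σ),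
      (if z σ ≤ r then h ^ (W σ - (d - r) - 1) * Dm σ else 0) with hE
  refine ⟨E, ?_, ?_⟩
  · have hmain : ∑ σ ∈ Finset.univ.filter p, h ^ W σ * Dm σ
        = h ^ (d - r) * gammaR r A B := by
      rw [← hgamma, Finset.mul_sum]
      refine Finset.sum_congr rfl fun σ hσ => ?_
      obtain ⟨h1', h2'⟩ : z σ = r ∧ t σ = 0 := (Finset.mem_filter.mp hσ).2
      have hWσ : W σ = d - r := by have := hWzt σ; omega
      rw [hWσ]
    have hrest : ∑ σ ∈ Finset.univ.filter (fun σ => ¬ p σ), h ^ W σ * Dm σ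
        = h ^ (d - r) * (h * E) := by
      rw [hE, Finset.mul_sum, Finset.mul_sum]
      refine Finset.sum_congr rfl fun σ hσ => ?_
      have hnp : ¬ (z σ = r ∧ t σ = 0) := (Finset.mem_filter.mp hσ).2
      by_cases hzr : z σ ≤ r
      · have hW1 : d - r + 1 ≤ W σ := by have := hWzt σ; omega
        rw [if_pos hzr]
        have hexp : (d - r) + (1 + (W σ - (d - r) - 1)) = W σ := by omega
        calc h ^ W σ * Dm σ = h ^ ((d - r) + (1 + (W σ - (d - r) - 1))) * Dm σ := by rw [hexp]
          _ = h ^ (d - r) * (h * (h ^ (W σ - (d - r) - 1) * Dm σ)) := by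
              rw [pow_add, pow_add, pow_one]; ring
      · rw [if_neg hzr, hDzero σ (by omega)]
        ring
    rw [hdet, ← hsplit, hmain, hrest]
    ring
  · have hterm : ∀ σ ∈ Finset.univ.filter (fun σ => ¬ p σ),
        |if z σ ≤ r then h ^ (W σ - (d - r) - 1) * Dm σ else 0| ≤ d.factorial * β ^ d := by
      intro σ _
      by_cases hzr : z σ ≤ r
      · rw [if_pos hzr, abs_mul, abs_pow]
        have h1' : |h| ≤ 1 := by rw [abs_of_pos h0]; exact h1
        have h2' : |h| ^ (W σ - (d - r) - 1) ≤ 1 := pow_le_one₀ (abs_nonneg _) h1'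
        calc |h| ^ (W σ - (d - r) - 1) * |Dm σ| ≤ 1 * (d.factorial * β ^ d) :=
              mul_le_mul h2' (hDbound σ) (abs_nonneg _) one_pos.le
          _ = d.factorial * β ^ d := one_mul _
      · rw [if_neg hzr, abs_zero]
        exact mul_nonneg (by positivity) (pow_nonneg hβ d)
    calc |E| ≤ ∑ σ ∈ Finset.univ.filter (fun σ => ¬ p σ),
          |if z σ ≤ r then h ^ (W σ - (d - r) - 1) * Dm σ else 0| := by
          rw [hE]; exact Finset.abs_sum_le_sum_abs _ _
      _ ≤ ∑ _σ ∈ Finset.univ.filter (fun σ => ¬ p σ), d.factorial * β ^ d :=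
          Finset.sum_le_sum hterm
      _ = (Finset.univ.filter (fun σ => ¬ p σ)).card * (d.factorial * β ^ d) := by
          rw [Finset.sum_const, nsmul_eq_mul]
      _ ≤ 3 ^ d * (d.factorial * β ^ d) := by
          have hcard : ((Finset.univ.filter (fun σ => ¬ p σ)).card : ℝ) ≤ 3 ^ d := by
            have h' : (Finset.univ.filter (fun σ => ¬ p σ)).card ≤ 3 ^ d := by
              simpa [Fintype.card_fun] using
                Finset.card_le_univ (Finset.univ.filter (fun σ => ¬ p σ))
            exact_mod_cast h'
          exact mul_le_mul_of_nonneg_right hcard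
            (mul_nonneg (by positivity) (pow_nonneg hβ d))
      _ = 3 ^ d * d.factorial * β ^ d := by ring

lemma abs_gammaR_le (r : ℕ) (A B : Matrix (Fin d) (Fin d) ℝ) {β : ℝ} (hβ : 0 ≤ β)
    (hAb : ∀ i j, |A i j| ≤ β) (hBb : ∀ i j, |B i j| ≤ β) :
    |gammaR r A B| ≤ 2 ^ d * d.factorial * β ^ d := by
  calc |gammaR r A B| ≤ ∑ I ∈ Finset.univ.powersetCard r, |(colMix A B I).det| :=
        Finset.abs_sum_le_sum_abs _ _
    _ ≤ ∑ _I ∈ Finset.univ.powersetCard r, ((d.factorial : ℝ) * β ^ d) :=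
        Finset.sum_le_sum fun I _ => abs_det_le (fun i j => by
          show |if j ∈ I then A i j else B i j| ≤ β
          by_cases hj : j ∈ I
          · simpa [hj] using hAb i j
          · simpa [hj] using hBb i j)
    _ = (Finset.univ.powersetCard r).card * ((d.factorial : ℝ) * β ^ d) := by
        rw [Finset.sum_const, nsmul_eq_mul]
    _ ≤ 2 ^ d * ((d.factorial : ℝ) * β ^ d) := by
        refine mul_le_mul_of_nonneg_right ?_ (mul_nonneg (by positivity) (pow_nonneg hβ d))
        have hsub : (Finset.univ.powersetCard r : Finset (Finset (Fin d)))
            ⊆ Finset.univ.powerset := fun I _ => Finset.mem_powerset.mpr (Finset.subset_univ I)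
        have := Finset.card_le_card hsub
        rw [Finset.card_powerset] at this
        simp only [Finset.card_univ, Fintype.card_fin] at this
        exact_mod_cast this
    _ = 2 ^ d * d.factorial * β ^ d := by ring

lemma combine {n : ℕ} {γ E γ' E' Λ Λ' h h' c0 c1 : ℝ}
    (hc0 : 0 ≤ c0) (hc1 : 0 ≤ c1) (hΛ : 0 ≤ Λ) (hΛ' : 0 ≤ Λ')
    (h0 : 0 < h) (h1 : h ≤ 1) (h0' : 0 < h') (h1' : h' ≤ 1)
    (hγ : |γ| ≤ c0 * Λ ^ n) (hγ' : |γ'| ≤ c0 * Λ' ^ n)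
    (hE : |E| ≤ c1 * Λ ^ n) (hE' : |E'| ≤ c1 * Λ' ^ n) :
    |(γ + h * E) ^ 2 * (γ' + h' * E') ^ 2 - γ ^ 2 * γ' ^ 2|
      ≤ (((c0 + c1) ^ 2 + c0 ^ 2) * (c1 * (2 * c0 + c1))) * (h + h')
          * (Λ ^ n * Λ' ^ n) ^ 2 := by
  set a := Λ ^ n with ha
  set a' := Λ' ^ n with ha'
  have ha0 : 0 ≤ a := pow_nonneg hΛ n
  have ha0' : 0 ≤ a' := pow_nonneg hΛ' n
  set c2 : ℝ := c1 * (2 * c0 + c1) with hc2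
  have hc20 : 0 ≤ c2 := mul_nonneg hc1 (by linarith)
  -- generic single-factor facts
  have single : ∀ (g e t : ℝ), 0 < t → t ≤ 1 → ∀ (b : ℝ), 0 ≤ b →
      |g| ≤ c0 * b → |e| ≤ c1 * b →
      |g + t * e| ≤ (c0 + c1) * b ∧ |(g + t * e) ^ 2 - g ^ 2| ≤ t * (c2 * b ^ 2) := by
    intro g e t t0 t1 b b0 hg he
    have hte : |t * e| ≤ c1 * b := by
      rw [abs_mul, abs_of_pos t0]
      calc t * |e| ≤ 1 * (c1 * b) :=
            mul_le_mul t1 he (abs_nonneg _) one_pos.le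
        _ = c1 * b := one_mul _
    have hsum : |g + t * e| ≤ (c0 + c1) * b := by
      calc |g + t * e| ≤ |g| + |t * e| := abs_add_le _ _
        _ ≤ c0 * b + c1 * b := add_le_add hg hte
        _ = (c0 + c1) * b := by ring
    refine ⟨hsum, ?_⟩
    have h2g : |2 * g + t * e| ≤ (2 * c0 + c1) * b := by
      calc |2 * g + t * e| ≤ |2 * g| + |t * e| := abs_add_le _ _
        _ ≤ 2 * (c0 * b) + c1 * b := by
            rw [abs_mul, abs_two]
            exact add_le_add (by linarith) hte
        _ = (2 * c0 + c1) * b := by ring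
    calc |(g + t * e) ^ 2 - g ^ 2| = |t| * (|e| * |2 * g + t * e|) := by
          rw [← abs_mul, ← abs_mul]; congr 1; ring
      _ ≤ t * ((c1 * b) * ((2 * c0 + c1) * b)) := by
          rw [abs_of_pos t0]
          refine mul_le_mul_of_nonneg_left ?_ t0.le
          exact mul_le_mul he h2g (abs_nonneg _) (mul_nonneg hc1 b0)
      _ = t * (c2 * b ^ 2) := by rw [hc2]; ring
  obtain ⟨hs, hd⟩ := single γ E h h0 h1 a ha0 hγ hE
  obtain ⟨hs', hd'⟩ := single γ' E' h' h0' h1' a' ha0' hγ' hE'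
  have hXb : |(γ + h * E) ^ 2| ≤ ((c0 + c1) * a) ^ 2 := by
    rw [abs_pow]
    exact pow_le_pow_left₀ (abs_nonneg _) hs 2
  have hγ'2 : |γ' ^ 2| ≤ (c0 * a') ^ 2 := by
    rw [abs_pow]
    exact pow_le_pow_left₀ (abs_nonneg _) hγ' 2
  calc |(γ + h * E) ^ 2 * (γ' + h' * E') ^ 2 - γ ^ 2 * γ' ^ 2|
      = |(γ + h * E) ^ 2 * ((γ' + h' * E') ^ 2 - γ' ^ 2)
          + γ' ^ 2 * ((γ + h * E) ^ 2 - γ ^ 2)| := by congr 1; ring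
    _ ≤ |(γ + h * E) ^ 2| * |(γ' + h' * E') ^ 2 - γ' ^ 2|
          + |γ' ^ 2| * |(γ + h * E) ^ 2 - γ ^ 2| := by
        refine le_trans (abs_add_le _ _) ?_
        rw [abs_mul, abs_mul]
    _ ≤ ((c0 + c1) * a) ^ 2 * (h' * (c2 * a' ^ 2))
          + (c0 * a') ^ 2 * (h * (c2 * a ^ 2)) := by
        refine add_le_add ?_ ?_
        · exact mul_le_mul hXb hd' (abs_nonneg _) (by positivity)
        · exact mul_le_mul hγ'2 hd (abs_nonneg _) (by positivity)
    _ ≤ ((c0 + c1) * a) ^ 2 * ((h + h') * (c2 * a' ^ 2))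
          + (c0 * a') ^ 2 * ((h + h') * (c2 * a ^ 2)) := by
        refine add_le_add ?_ ?_ <;>
          refine mul_le_mul_of_nonneg_left ?_ (by positivity) <;>
          refine mul_le_mul_of_nonneg_right ?_ (by positivity) <;> linarith
    _ = (((c0 + c1) ^ 2 + c0 ^ 2) * c2) * (h + h') * (a * a') ^ 2 := by ring

theorem det_sq_product_expansion (d : ℕ) :
    ∃ K > (0:ℝ), ∀ r ≤ d, ∀ h ∈ Set.Ioc (0:ℝ) 1, ∀ h' ∈ Set.Ioc (0:ℝ) 1,
      ∀ A B C D A' B' C' D' : Matrix (Fin d) (Fin d) ℝ,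
        A.rank ≤ r → A'.rank ≤ r →
        |(A + h • B + (h ^ 2) • C + (h ^ 2) • D).det ^ 2
              * (A' + h' • B' + (h' ^ 2) • C' + (h' ^ 2) • D').det ^ 2
              / (h * h') ^ (2 * d - 2 * r)
            - gammaR r A B ^ 2 * gammaR r A' B' ^ 2|
          ≤ K * (h + h')
              * ((frob A + frob B + frob C + frob D)
                  * (frob A' + frob B' + frob C' + frob D')) ^ (2 * d) := by
  classical
  refine ⟨((((2:ℝ) ^ d * d.factorial + 3 ^ d * d.factorial) ^ 2
        + ((2:ℝ) ^ d * d.factorial) ^ 2)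
      * (((3:ℝ) ^ d * d.factorial) * (2 * ((2:ℝ) ^ d * d.factorial)
        + (3:ℝ) ^ d * d.factorial))) + 1, by positivity, ?_⟩
  intro r hr h hh h' hh' A B C D A' B' C' D' hA hA'
  obtain ⟨h0, h1⟩ := hh
  obtain ⟨h0', h1'⟩ := hh'
  have hΛ0 : (0:ℝ) ≤ frob A + frob B + frob C + frob D := by
    linarith [frob_nonneg A, frob_nonneg B, frob_nonneg C, frob_nonneg D]
  have hΛ0' : (0:ℝ) ≤ frob A' + frob B' + frob C' + frob D' := by
    linarith [frob_nonneg A', frob_nonneg B', frob_nonneg C', frob_nonneg D']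
  have hAb : ∀ i j, |A i j| ≤ frob A + frob B + frob C + frob D := fun i j => by
    linarith [abs_entry_le_frob A i j, frob_nonneg B, frob_nonneg C, frob_nonneg D]
  have hBb : ∀ i j, |B i j| ≤ frob A + frob B + frob C + frob D := fun i j => by
    linarith [abs_entry_le_frob B i j, frob_nonneg A, frob_nonneg C, frob_nonneg D]
  have hNb : ∀ i j, |(C + D) i j| ≤ frob A + frob B + frob C + frob D := fun i j => by
    have habs : |(C + D) i j| ≤ |C i j| + |D i j| := by
      rw [Matrix.add_apply]; exact abs_add_le _ _
    linarith [abs_entry_le_frob C i j, abs_entry_le_frob D i j, frob_nonneg A, frob_nonneg B]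
  have hAb' : ∀ i j, |A' i j| ≤ frob A' + frob B' + frob C' + frob D' := fun i j => by
    linarith [abs_entry_le_frob A' i j, frob_nonneg B', frob_nonneg C', frob_nonneg D']
  have hBb' : ∀ i j, |B' i j| ≤ frob A' + frob B' + frob C' + frob D' := fun i j => by
    linarith [abs_entry_le_frob B' i j, frob_nonneg A', frob_nonneg C', frob_nonneg D']
  have hNb' : ∀ i j, |(C' + D') i j| ≤ frob A' + frob B' + frob C' + frob D' := fun i j => by
    have habs : |(C' + D') i j| ≤ |C' i j| + |D' i j| := by
      rw [Matrix.add_apply]; exact abs_add_le _ _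
    linarith [abs_entry_le_frob C' i j, abs_entry_le_frob D' i j,
      frob_nonneg A', frob_nonneg B']
  have hM : A + h • B + (h ^ 2) • C + (h ^ 2) • D = A + h • B + (h ^ 2) • (C + D) := by
    rw [smul_add]; exact add_assoc _ _ _
  have hM' : A' + h' • B' + (h' ^ 2) • C' + (h' ^ 2) • D'
      = A' + h' • B' + (h' ^ 2) • (C' + D') := by
    rw [smul_add]; exact add_assoc _ _ _
  obtain ⟨E, hEeq, hEb⟩ := det_expand r hr h0 h1 A B (C + D) hA hΛ0 hAb hBb hNb
  obtain ⟨E', hEeq', hEb'⟩ := det_expand r hr h0' h1' A' B' (C' + D') hA' hΛ0' hAb' hBb' hNb'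
  have hγ := abs_gammaR_le r A B hΛ0 hAb hBb
  have hγ' := abs_gammaR_le r A' B' hΛ0' hAb' hBb'
  have hfrac : (A + h • B + (h ^ 2) • C + (h ^ 2) • D).det ^ 2
      * (A' + h' • B' + (h' ^ 2) • C' + (h' ^ 2) • D').det ^ 2 / (h * h') ^ (2 * d - 2 * r)
      = (gammaR r A B + h * E) ^ 2 * (gammaR r A' B' + h' * E') ^ 2 := by
    rw [hM, hM', hEeq, hEeq']
    have he : 2 * d - 2 * r = 2 * (d - r) := by omega
    rw [he, mul_pow h h', mul_pow (h ^ (d - r)), mul_pow (h' ^ (d - r)),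
      ← pow_mul, ← pow_mul, mul_comm (d - r) 2]
    rw [show h ^ (2 * (d - r)) * (gammaR r A B + h * E) ^ 2
        * (h' ^ (2 * (d - r)) * (gammaR r A' B' + h' * E') ^ 2)
        = (h ^ (2 * (d - r)) * h' ^ (2 * (d - r)))
          * ((gammaR r A B + h * E) ^ 2 * (gammaR r A' B' + h' * E') ^ 2) from by ring]
    exact mul_div_cancel_left₀ _ (by positivity)
  rw [hfrac]
  have hpow : ((frob A + frob B + frob C + frob D)
      * (frob A' + frob B' + frob C' + frob D')) ^ (2 * d)
      = ((frob A + frob B + frob C + frob D) ^ d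
        * (frob A' + frob B' + frob C' + frob D') ^ d) ^ 2 := by
    rw [mul_comm 2 d, pow_mul, mul_pow]
  rw [hpow]
  have hcomb := combine (c0 := (2:ℝ) ^ d * d.factorial) (c1 := (3:ℝ) ^ d * d.factorial)
    (by positivity) (by positivity) hΛ0 hΛ0' h0 h1 h0' h1' hγ hγ' hEb hEb'
  refine le_trans hcomb ?_
  refine mul_le_mul_of_nonneg_right ?_ (by positivity)
  refine mul_le_mul_of_nonneg_right ?_ (by linarith)
  linarith
end
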